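/- For every positive measurable function e : ℝ² → ℝ, every pair R, R' ∈ L^∞(ℝ²,ℂ), and every ξ ∈ ℝ², the following bound holds: |∫_{ℝ²} e^{i(x,ξ)} ( h(x, e(x)|1+R(x)|)(1+R(x)) − h(x, e(x)|1+R'(x)|)(1+R'(x)) ) dx| ≤ ( ‖β‖_{L¹(ℝ²)}(1 + ‖R'‖_{L^∞}) + ‖α‖_{L¹(ℝ²)} ) ‖R − R'‖_{L^∞}. -/

import Mathlib

open MeasureTheory
open scoped RealInnerProductSpace

lemma ae_norm_le_of_memTop {X : Type*} [MeasurableSpace X] {μ : Measure X}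
    {f : X → ℂ} (hf : MemLp f ⊤ μ) :
    ∀ᵐ x ∂μ, ‖f x‖ ≤ (eLpNorm f ⊤ μ).toReal := by
  have h1 : ∀ᵐ x ∂μ, (‖f x‖₊ : ENNReal) ≤ eLpNormEssSup f μ := ae_le_eLpNormEssSup
  have hfin : eLpNorm f ⊤ μ ≠ ⊤ := hf.2.ne
  rw [eLpNorm_exponent_top] at hfin
  filter_upwards [h1] with x hx
  have := ENNReal.toReal_mono hfin hx
  simpa [eLpNorm_exponent_top] using this

lemma integral_eq_eLpNorm_one {X : Type*} [MeasurableSpace X] {μ : Measure X}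
    {f : X → ℝ} (h0 : ∀ x, 0 ≤ f x) (hi : Integrable f μ) :
    ∫ x, f x ∂μ = (eLpNorm f 1 μ).toReal := by
  rw [eLpNorm_one_eq_lintegral_enorm,
    ← integral_norm_eq_lintegral_enorm hi.aestronglyMeasurable]
  exact integral_congr_ae (Filter.Eventually.of_forall fun x => (abs_of_nonneg (h0 x)).symm)

/-- For every positive measurable `e`, every `R, R' ∈ L^∞(ℝ²,ℂ)` and every
`ξ ∈ ℝ²`, the oscillatory integral of the difference of the two nonlinear terms
is bounded by `(‖β‖_{L¹}(1 + ‖R'‖_∞) + ‖α‖_{L¹})‖R - R'‖_∞`. -/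
theorem stmt4
    (Ω : Set (EuclideanSpace ℝ (Fin 2)))
    (hΩb : Bornology.IsBounded Ω) (hΩm : MeasurableSet Ω)
    (α β : EuclideanSpace ℝ (Fin 2) → ℝ)
    (hα0 : ∀ x, 0 ≤ α x) (hβ0 : ∀ x, 0 ≤ β x)
    (hαΩ : ∀ x ∉ Ω, α x = 0) (hβΩ : ∀ x ∉ Ω, β x = 0)
    (hαL2 : MemLp α 2 volume) (hβL2 : MemLp β 2 volume)
    (hαpos : eLpNorm α 2 volume ≠ 0) (hβpos : eLpNorm β 2 volume ≠ 0)
    (h : EuclideanSpace ℝ (Fin 2) → ℝ → ℂ)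
    (hhα : ∀ x s, 0 ≤ s → ‖h x s‖ ≤ α x)
    (hhβ : ∀ (x : EuclideanSpace ℝ (Fin 2)) (a : ℝ), 0 < a → ∀ w₁ w₂ : ℂ,
      ‖h x (a * ‖1 + w₁‖) - h x (a * ‖1 + w₂‖)‖ ≤ β x * ‖w₁ - w₂‖)
    (hhm : ∀ e : EuclideanSpace ℝ (Fin 2) → ℝ, Measurable e → (∀ x, 0 < e x) →
      ∀ R : EuclideanSpace ℝ (Fin 2) → ℂ, Measurable R →
        Measurable (fun x => h x (e x * ‖1 + R x‖))) :
    ∀ e : EuclideanSpace ℝ (Fin 2) → ℝ, Measurable e → (∀ x, 0 < e x) →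
    ∀ R R' : EuclideanSpace ℝ (Fin 2) → ℂ, MemLp R ⊤ volume → MemLp R' ⊤ volume →
    ∀ ξ : EuclideanSpace ℝ (Fin 2),
      ‖∫ x, Complex.exp (((⟪x, ξ⟫ : ℝ) : ℂ) * Complex.I) *
          (h x (e x * ‖1 + R x‖) * (1 + R x) - h x (e x * ‖1 + R' x‖) * (1 + R' x))‖ ≤
        ((eLpNorm β 1 volume).toReal * (1 + (eLpNorm R' ⊤ volume).toReal) +
            (eLpNorm α 1 volume).toReal) *
          (eLpNorm (fun x => R x - R' x) ⊤ volume).toReal := by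
  intro e he hepos R R' hR hR' ξ
  -- finite measure of Ω
  have hΩfin : volume Ω ≠ ⊤ :=
    (hΩb.measure_lt_top).ne
  -- α and β are integrable
  have hαint : Integrable α volume :=
    memLp_one_iff_integrable.mp ((hαL2.mono_exponent_of_measure_support_ne_top hαΩ hΩfin
      (by norm_num)))
  have hβint : Integrable β volume :=
    memLp_one_iff_integrable.mp ((hβL2.mono_exponent_of_measure_support_ne_top hβΩ hΩfin
      (by norm_num)))
  set M' : ℝ := (eLpNorm R' ⊤ volume).toReal with hM'
  set K : ℝ := (eLpNorm (fun x => R x - R' x) ⊤ volume).toReal with hK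
  have hK0 : 0 ≤ K := ENNReal.toReal_nonneg
  have hM'0 : 0 ≤ M' := ENNReal.toReal_nonneg
  have haeR' : ∀ᵐ x, ‖R' x‖ ≤ M' := ae_norm_le_of_memTop hR'
  have haeD : ∀ᵐ x, ‖R x - R' x‖ ≤ K := ae_norm_le_of_memTop (hR.sub hR')
  set g : EuclideanSpace ℝ (Fin 2) → ℝ := fun x => (β x * (1 + M') + α x) * K with hg
  have hgint : Integrable g volume := ((hβint.mul_const _).add hαint).mul_const _
  have key : ∀ᵐ x, ‖Complex.exp (((⟪x, ξ⟫ : ℝ) : ℂ) * Complex.I) *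
      (h x (e x * ‖1 + R x‖) * (1 + R x) - h x (e x * ‖1 + R' x‖) * (1 + R' x))‖ ≤ g x := by
    filter_upwards [haeR', haeD] with x hx1 hx2
    rw [norm_mul, Complex.norm_exp_ofReal_mul_I, one_mul]
    have hrw : h x (e x * ‖1 + R x‖) * (1 + R x) - h x (e x * ‖1 + R' x‖) * (1 + R' x)
        = h x (e x * ‖1 + R x‖) * (R x - R' x)
          + (h x (e x * ‖1 + R x‖) - h x (e x * ‖1 + R' x‖)) * (1 + R' x) := by ring
    rw [hrw]
    have h1 : ‖h x (e x * ‖1 + R x‖) * (R x - R' x)‖ ≤ α x * K := by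
      rw [norm_mul]
      exact mul_le_mul (hhα x _ (mul_nonneg (hepos x).le (norm_nonneg _))) hx2
        (norm_nonneg _) (hα0 x)
    have h2 : ‖(h x (e x * ‖1 + R x‖) - h x (e x * ‖1 + R' x‖)) * (1 + R' x)‖
        ≤ β x * K * (1 + M') := by
      rw [norm_mul]
      have hb : ‖h x (e x * ‖1 + R x‖) - h x (e x * ‖1 + R' x‖)‖ ≤ β x * K :=
        le_trans (hhβ x (e x) (hepos x) (R x) (R' x))
          (mul_le_mul_of_nonneg_left hx2 (hβ0 x))
      have hn : ‖(1 : ℂ) + R' x‖ ≤ 1 + M' :=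
        le_trans (norm_add_le _ _) (by simpa using hx1)
      exact mul_le_mul hb hn (norm_nonneg _) (mul_nonneg (hβ0 x) hK0)
    calc ‖_ + _‖ ≤ _ + _ := norm_add_le _ _
      _ ≤ α x * K + β x * K * (1 + M') := add_le_add h1 h2
      _ = g x := by rw [hg]; ring
  have hbound : ‖∫ x, Complex.exp (((⟪x, ξ⟫ : ℝ) : ℂ) * Complex.I) *
      (h x (e x * ‖1 + R x‖) * (1 + R x) - h x (e x * ‖1 + R' x‖) * (1 + R' x))‖
      ≤ ∫ x, g x := by
    refine le_trans (norm_integral_le_integral_norm _) ?_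
    exact integral_mono_of_nonneg (Filter.Eventually.of_forall fun x => norm_nonneg _)
      hgint key
  refine le_trans hbound ?_
  have : ∫ x, g x = ((∫ x, β x) * (1 + M') + ∫ x, α x) * K := by
    rw [hg]
    rw [integral_mul_const, integral_add (hβint.mul_const _) hαint, integral_mul_const]
  rw [this, integral_eq_eLpNorm_one hβ0 hβint, integral_eq_eLpNorm_one hα0 hαint]
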